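/- Let X be a reflexive Banach space and suppose (X, 𝕂) has the L_{o,o} for linear functionals. Then for every Banach space Y and every compact operator T : X → Y with ‖T‖ = 1, the set NA(T) = {x ∈ S_X : ‖T(x)‖ = 1} is nonempty, and there is no sequence (xₙ) ⊆ S_X with ‖T(xₙ)‖ → 1 and dist(xₙ, NA(T)) ≥ ε₀ for some fixed ε₀ > 0. -/

import Mathlib

open scoped Topology
open Filter

/-- If `X` is reflexive and `(X, 𝕜)` has the `L_{o,o}` for linear
functionals, then for every Banach `Y` and compact norm-one `T : X → Y`, the set
`NA(T) = {x ∈ S_X : ‖T x‖ = 1}` is nonempty, and no sequence in `S_X` with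
`‖T xₙ‖ → 1` stays at distance `≥ ε₀ > 0` from `NA(T)`. -/
theorem stmt14 {𝕜 : Type*} [RCLike 𝕜] {X Y : Type*}
    [NormedAddCommGroup X] [NormedSpace 𝕜 X] [CompleteSpace X]
    [NormedAddCommGroup Y] [NormedSpace 𝕜 Y] [CompleteSpace Y]
    (hrefl : Function.Surjective (NormedSpace.inclusionInDoubleDual 𝕜 X))
    (hL : ∀ ε > (0 : ℝ), ∀ f : X →L[𝕜] 𝕜, ‖f‖ = 1 →
      ∃ η > (0 : ℝ), ∀ x : X, ‖x‖ = 1 → 1 - η < ‖f x‖ →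
        ∃ x₀ : X, ‖x₀‖ = 1 ∧ ‖f x₀‖ = 1 ∧ ‖x₀ - x‖ < ε)
    (T : X →L[𝕜] Y) (hTc : IsCompactOperator T) (hT : ‖T‖ = 1) :
    ({x : X | ‖x‖ = 1 ∧ ‖T x‖ = 1}).Nonempty ∧
      ¬ ∃ (x : ℕ → X) (ε₀ : ℝ), 0 < ε₀ ∧ (∀ n, ‖x n‖ = 1) ∧
        Tendsto (fun n => ‖T (x n)‖) atTop (𝓝 1) ∧
        ∀ n, ε₀ ≤ Metric.infDist (x n) {z : X | ‖z‖ = 1 ∧ ‖T z‖ = 1} := by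
  -- key claim: for any ε > 0 and any normalized sequence with ‖T (u n)‖ → 1,
  -- some term of the sequence is within ε of the norm-attainment set.
  have key : ∀ ε > (0 : ℝ), ∀ u : ℕ → X, (∀ n, ‖u n‖ = 1) →
      Tendsto (fun n => ‖T (u n)‖) atTop (𝓝 1) →
      ∃ m z, (‖z‖ = 1 ∧ ‖T z‖ = 1) ∧ dist (u m) z < ε := by
    intro ε hε u hu htu
    obtain ⟨K, hK, hKmem⟩ := hTc
    obtain ⟨r, hr, hball⟩ := Metric.mem_nhds_iff.mp hKmem
    set c : ℝ := r / 2 with hc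
    have hc0 : 0 < c := by positivity
    have hmemK : ∀ n, ((c : 𝕜) • T (u n)) ∈ K := by
      intro n
      have hx : ((c : 𝕜) • u n) ∈ Metric.ball (0 : X) r := by
        simp only [Metric.mem_ball, dist_zero_right, norm_smul, RCLike.norm_ofNat,
          RCLike.norm_coe_norm]
        have : ‖(c : 𝕜)‖ = c := by
          rw [RCLike.norm_ofReal, abs_of_pos hc0]
        rw [this, hu n, mul_one]
        linarith
      have := hball hx
      simpa using this
    obtain ⟨w, hwK, φ, hφ, hφt⟩ := hK.tendsto_subseq hmemK
    -- the limit of T (u (φ n))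
    set y : Y := (c : 𝕜)⁻¹ • w with hy
    have hcne : (c : 𝕜) ≠ 0 := by
      simpa using ne_of_gt hc0
    have hty : Tendsto (fun n => T (u (φ n))) atTop (𝓝 y) := by
      have := hφt.const_smul ((c : 𝕜)⁻¹)
      simp only [Function.comp] at this
      convert this using 2 with n
      · rw [smul_smul, inv_mul_cancel₀ hcne, one_smul]
    have htu' : Tendsto (fun n => ‖T (u (φ n))‖) atTop (𝓝 1) :=
      htu.comp (hφ.tendsto_atTop)
    have hynorm : ‖y‖ = 1 :=
      tendsto_nhds_unique (hty.norm) htu'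
    have hy0 : y ≠ 0 := by
      intro h; rw [h, norm_zero] at hynorm; norm_num at hynorm
    obtain ⟨g, hg1, hgy⟩ := exists_dual_vector 𝕜 y (norm_ne_zero_iff.mpr hy0)
    set f : X →L[𝕜] 𝕜 := g.comp T with hf
    have hfle : ‖f‖ ≤ 1 := by
      calc ‖f‖ ≤ ‖g‖ * ‖T‖ := ContinuousLinearMap.opNorm_comp_le g T
      _ = 1 := by rw [hg1, hT, one_mul]
    have hft : Tendsto (fun n => ‖f (u (φ n))‖) atTop (𝓝 1) := by
      have : Tendsto (fun n => g (T (u (φ n)))) atTop (𝓝 (g y)) :=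
        (g.continuous.tendsto y).comp hty
      have h2 := this.norm
      have : ‖g y‖ = 1 := by
        rw [hgy, hynorm]; simp
      rw [this] at h2
      exact h2
    have hfge : 1 ≤ ‖f‖ := by
      refine le_of_tendsto hft (Eventually.of_forall fun n => ?_)
      calc ‖f (u (φ n))‖ ≤ ‖f‖ * ‖u (φ n)‖ := f.le_opNorm _
      _ = ‖f‖ := by rw [hu, mul_one]
    have hf1 : ‖f‖ = 1 := le_antisymm hfle hfge
    obtain ⟨η, hη, hspec⟩ := hL ε hε f hf1
    have : ∀ᶠ n in atTop, 1 - η < ‖f (u (φ n))‖ :=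
      (tendsto_order.1 hft).1 (1 - η) (by linarith)
    obtain ⟨n, hn⟩ := this.exists
    obtain ⟨z, hz1, hfz, hzd⟩ := hspec (u (φ n)) (hu _) hn
    have hTz : ‖T z‖ = 1 := by
      have h1 : 1 ≤ ‖T z‖ := by
        calc (1 : ℝ) = ‖f z‖ := hfz.symm
        _ = ‖g (T z)‖ := rfl
        _ ≤ ‖g‖ * ‖T z‖ := g.le_opNorm _
        _ = ‖T z‖ := by rw [hg1, one_mul]
      have h2 : ‖T z‖ ≤ 1 := by
        calc ‖T z‖ ≤ ‖T‖ * ‖z‖ := T.le_opNorm _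
        _ = 1 := by rw [hT, hz1, mul_one]
      exact le_antisymm h2 h1
    refine ⟨φ n, z, ⟨hz1, hTz⟩, ?_⟩
    rw [dist_eq_norm, ← norm_neg]
    simpa using hzd
  -- a normalized sequence with ‖T (u n)‖ → 1
  obtain ⟨u, hu, hut⟩ : ∃ u : ℕ → X, (∀ n, ‖u n‖ = 1) ∧
      Tendsto (fun n => ‖T (u n)‖) atTop (𝓝 1) := by
    have hsel : ∀ n : ℕ, ∃ v : X, ‖v‖ = 1 ∧ 1 - 1 / (n + 1) < ‖T v‖ := by
      intro n
      have hlt : 1 - 1 / ((n : ℝ) + 1) < ‖T‖ := by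
        rw [hT]
        have : 0 < 1 / ((n : ℝ) + 1) := by positivity
        linarith
      have hnn : (0 : ℝ) ≤ 1 - 1 / ((n : ℝ) + 1) := by
        have h1 : 1 / ((n : ℝ) + 1) ≤ 1 := by
          rw [div_le_one (by positivity)]
          simp
        linarith
      have : ¬ (‖T‖ ≤ 1 - 1 / ((n : ℝ) + 1)) := not_le.mpr hlt
      rw [ContinuousLinearMap.opNorm_le_iff hnn] at this
      push_neg at this
      obtain ⟨x, hx⟩ := this
      have hx0 : x ≠ 0 := by
        intro h
        rw [h] at hx
        simp at hx
      have hxn : (0 : ℝ) < ‖x‖ := norm_pos_iff.mpr hx0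
      refine ⟨((‖x‖⁻¹ : ℝ) : 𝕜) • x, ?_, ?_⟩
      · rw [norm_smul, RCLike.norm_ofReal, abs_of_pos (by positivity),
          inv_mul_cancel₀ (ne_of_gt hxn)]
      · rw [map_smul, norm_smul, RCLike.norm_ofReal, abs_of_pos (by positivity)]
        rw [inv_mul_eq_div, lt_div_iff₀ hxn]
        exact hx
    choose u hu1 hu2 using hsel
    refine ⟨u, hu1, ?_⟩
    have hlow : Tendsto (fun n : ℕ => 1 - 1 / ((n : ℝ) + 1)) atTop (𝓝 1) := by
      have := tendsto_one_div_add_atTop_nhds_zero_nat (𝕜 := ℝ)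
      have h2 := (tendsto_const_nhds (x := (1 : ℝ)) (f := atTop)).sub this
      simpa using h2
    refine tendsto_of_tendsto_of_tendsto_of_le_of_le hlow tendsto_const_nhds
      (fun n => le_of_lt (hu2 n)) (fun n => ?_)
    calc ‖T (u n)‖ ≤ ‖T‖ * ‖u n‖ := T.le_opNorm _
    _ = 1 := by rw [hT, hu1, mul_one]
  constructor
  · obtain ⟨m, z, hz, _⟩ := key 1 one_pos u hu hut
    exact ⟨z, hz⟩
  · rintro ⟨x, ε₀, hε₀, hx1, hxT, hxd⟩
    obtain ⟨m, z, hz, hd⟩ := key ε₀ hε₀ x hx1 hxT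
    have : Metric.infDist (x m) {z : X | ‖z‖ = 1 ∧ ‖T z‖ = 1} ≤ dist (x m) z :=
      Metric.infDist_le_dist_of_mem hz
    linarith [hxd m]
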